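/- For any nonzero matrix ξ on a finite-dimensional bipartite Hilbert space A⊗B with dim B = d_B, the positive semidefinite operator √(ξξ†) satisfies √(ξξ†) ⪯ d_B · ‖ξ‖₁ · (σ_A ⊗ 1_B), where σ_A := ‖ξ‖₁⁻¹ · Tr_B[√(ξξ†)] is a unit-trace positive semidefinite operator on A. -/

import Mathlib

open Matrix Kronecker
open scoped ComplexOrder
open scoped MatrixOrder

/-- `√(M Mᴴ)`, the positive semidefinite absolute value of a matrix. -/
noncomputable def absM {n : Type*} [Fintype n] [DecidableEq n] (M : Matrix n n ℂ) :
    Matrix n n ℂ :=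
  CFC.sqrt (M * Mᴴ)

/-- The trace norm `‖M‖₁ = Tr √(M Mᴴ)`. -/
noncomputable def traceNorm {n : Type*} [Fintype n] [DecidableEq n] (M : Matrix n n ℂ) : ℝ :=
  (absM M).trace.re

/-- Partial trace over the second (B) tensor factor. -/
noncomputable def ptraceB {A B : Type*} [Fintype A] [Fintype B]
    (M : Matrix (A × B) (A × B) ℂ) : Matrix A A ℂ :=
  Matrix.of fun i j => ∑ k : B, M (i, k) (j, k)

section Helpers

variable {A B : Type*} [Fintype A] [DecidableEq A] [Fintype B] [DecidableEq B]

def emb (x : A × B → ℂ) (b k : B) : A × B → ℂ := fun p => if p.2 = k then x (p.1, b) else 0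

lemma quad_emb (P : Matrix (A × B) (A × B) ℂ) (x : A × B → ℂ) (b k : B) :
    star (emb x b k) ⬝ᵥ (P *ᵥ emb x b k)
      = ∑ i, ∑ j, star (x (i, b)) * P (i, k) (j, k) * x (j, b) := by
  simp only [dotProduct, mulVec, Pi.star_apply, emb, Fintype.sum_prod_type, apply_ite,
    star_zero, ite_mul, mul_ite, zero_mul, mul_zero, Finset.sum_ite_eq', Finset.mem_univ,
    if_true, dotProduct]
  congr 1; ext i
  rw [Finset.mul_sum]
  congr 1; ext j
  ring

lemma trace_ptraceB (P : Matrix (A × B) (A × B) ℂ) : (ptraceB P).trace = P.trace := by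
  simp [Matrix.trace, ptraceB, Matrix.diag, Fintype.sum_prod_type]

lemma herm_ptraceB {P : Matrix (A × B) (A × B) ℂ} (h : P.IsHermitian) :
    (ptraceB P).IsHermitian := by
  ext i j
  simp only [conjTranspose_apply, ptraceB, Matrix.of_apply, star_sum]
  exact Finset.sum_congr rfl fun k _ => h.apply _ _

set_option linter.unusedSectionVars false

lemma quad_kron (P : Matrix (A × B) (A × B) ℂ) (x : A × B → ℂ) :
    star x ⬝ᵥ ((ptraceB P ⊗ₖ (1 : Matrix B B ℂ)) *ᵥ x)
      = ∑ b, ∑ k, star (emb x b k) ⬝ᵥ (P *ᵥ emb x b k) := by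
  simp only [quad_emb]
  simp only [dotProduct, mulVec, Pi.star_apply, Fintype.sum_prod_type, kroneckerMap_apply,
    Matrix.one_apply, ptraceB, Matrix.of_apply, mul_ite, mul_one, mul_zero, ite_mul, zero_mul,
    Finset.sum_ite_eq', Finset.mem_univ, if_true, Finset.mul_sum, Finset.sum_mul]
  simp only [Finset.sum_ite_eq, Finset.mem_univ, if_true]
  conv_lhs => rw [Finset.sum_comm]
  refine Finset.sum_congr rfl fun b _ => ?_
  have h1 : ∀ (f : A → A → B → ℂ), (∑ i, ∑ j, ∑ k, f i j k) = ∑ k, ∑ i, ∑ j, f i j k := by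
    intro f
    calc (∑ i, ∑ j, ∑ k, f i j k) = ∑ i, ∑ k, ∑ j, f i j k :=
          Finset.sum_congr rfl fun i _ => Finset.sum_comm
      _ = ∑ k, ∑ i, ∑ j, f i j k := Finset.sum_comm
  rw [h1]
  refine Finset.sum_congr rfl fun k _ => Finset.sum_congr rfl fun i _ =>
    Finset.sum_congr rfl fun j _ => by ring

lemma sum_dotProduct' {n : Type*} [Fintype n] (v : B → n → ℂ) (w : n → ℂ) :
    (∑ b, v b) ⬝ᵥ w = ∑ b, v b ⬝ᵥ w := by
  simp only [dotProduct, Finset.sum_apply, Finset.sum_mul]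
  exact Finset.sum_comm

lemma dotProduct_sum' {n : Type*} [Fintype n] (w : n → ℂ) (v : B → n → ℂ) :
    w ⬝ᵥ (∑ b, v b) = ∑ b, w ⬝ᵥ v b := by
  simp only [dotProduct, Finset.sum_apply, Finset.mul_sum]
  exact Finset.sum_comm

lemma avg {n : Type*} [Fintype n] (u : B → n → ℂ) :
    star (∑ b, u b) ⬝ᵥ (∑ b, u b) ≤ (Fintype.card B : ℂ) * ∑ b, star (u b) ⬝ᵥ (u b) := by
  have key : (0:ℂ) ≤ ∑ b, ∑ b', star (u b - u b') ⬝ᵥ (u b - u b') :=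
    Finset.sum_nonneg fun b _ => Finset.sum_nonneg fun b' _ => dotProduct_star_self_nonneg _
  have expand : ∑ b, ∑ b', star (u b - u b') ⬝ᵥ (u b - u b')
      = 2 * ((Fintype.card B : ℂ) * ∑ b, star (u b) ⬝ᵥ (u b))
        - 2 * (star (∑ b, u b) ⬝ᵥ (∑ b, u b)) := by
    have h1 : ∀ b b', star (u b - u b') ⬝ᵥ (u b - u b')
        = star (u b) ⬝ᵥ u b - star (u b) ⬝ᵥ u b' - star (u b') ⬝ᵥ u b + star (u b') ⬝ᵥ u b' := by
      intro b b'
      rw [star_sub, sub_dotProduct, dotProduct_sub, dotProduct_sub]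
      ring
    simp only [h1, Finset.sum_add_distrib, Finset.sum_sub_distrib]
    have hsum : star (∑ b, u b) ⬝ᵥ (∑ b, u b) = ∑ b, ∑ b', star (u b) ⬝ᵥ u b' := by
      rw [star_sum, sum_dotProduct']
      exact Finset.sum_congr rfl fun b _ => dotProduct_sum' _ _
    have hc : ∀ f : B → ℂ, ∑ _b : B, ∑ b' : B, f b' = (Fintype.card B : ℂ) * ∑ b', f b' := by
      intro f
      simp [Finset.sum_const, Finset.card_univ, nsmul_eq_mul]
    have hc2 : ∀ f : B → ℂ, ∑ b : B, ∑ _b' : B, f b = (Fintype.card B : ℂ) * ∑ b, f b := by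
      intro f
      simp [Finset.sum_const, Finset.card_univ, nsmul_eq_mul, Finset.mul_sum, mul_comm, Finset.sum_mul]
    rw [hsum, hc (fun b' => star (u b') ⬝ᵥ u b'), hc2 (fun b => star (u b) ⬝ᵥ u b)]
    have hswap : ∑ b, ∑ b', star (u b') ⬝ᵥ u b = ∑ b, ∑ b', star (u b) ⬝ᵥ u b' :=
      Finset.sum_comm
    rw [hswap]
    ring
  rw [expand, sub_nonneg] at key
  have h2 : (0:ℂ) ≤ (2:ℂ)⁻¹ := by rw [Complex.le_def]; norm_num
  have h3 := mul_le_mul_of_nonneg_left key h2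
  rw [← mul_assoc, ← mul_assoc] at h3
  norm_num at h3
  rw [star_sum]
  exact h3

def embA (y : A → ℂ) (k : B) : A × B → ℂ := fun p => if p.2 = k then y p.1 else 0

lemma quad_ptraceB (P : Matrix (A × B) (A × B) ℂ) (y : A → ℂ) :
    star y ⬝ᵥ (ptraceB P *ᵥ y) = ∑ k, star (embA y k) ⬝ᵥ (P *ᵥ embA y k) := by
  have h : ∀ k, star (embA y k) ⬝ᵥ (P *ᵥ embA y k)
      = ∑ i, ∑ j, star (y i) * P (i, k) (j, k) * y j := by
    intro k
    simp only [dotProduct, mulVec, Pi.star_apply, embA, Fintype.sum_prod_type, apply_ite,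
      star_zero, ite_mul, mul_ite, zero_mul, mul_zero, Finset.sum_ite_eq', Finset.mem_univ,
      if_true, dotProduct]
    refine Finset.sum_congr rfl fun i _ => ?_
    rw [Finset.mul_sum]
    exact Finset.sum_congr rfl fun j _ => by ring
  simp only [h]
  simp only [dotProduct, mulVec, ptraceB, Matrix.of_apply, Pi.star_apply, Finset.mul_sum,
    Finset.sum_mul]
  have h1 : ∀ (f : A → A → B → ℂ), (∑ i, ∑ j, ∑ k, f i j k) = ∑ k, ∑ i, ∑ j, f i j k := by
    intro f
    calc (∑ i, ∑ j, ∑ k, f i j k) = ∑ i, ∑ k, ∑ j, f i j k :=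
          Finset.sum_congr rfl fun i _ => Finset.sum_comm
      _ = ∑ k, ∑ i, ∑ j, f i j k := Finset.sum_comm
  rw [h1]
  refine Finset.sum_congr rfl fun k _ => Finset.sum_congr rfl fun i _ =>
    Finset.sum_congr rfl fun j _ => by ring

lemma herm_kron {P : Matrix (A × B) (A × B) ℂ} (h : P.IsHermitian) :
    (ptraceB P ⊗ₖ (1 : Matrix B B ℂ)).IsHermitian := by
  ext ⟨i, b⟩ ⟨j, b'⟩
  simp only [conjTranspose_apply, kroneckerMap_apply, Matrix.one_apply, star_mul',
    apply_ite, star_one, star_zero]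
  rw [(herm_ptraceB h).apply]
  by_cases hb : b = b' <;> simp [hb, eq_comm]

theorem keyPSD (P : Matrix (A × B) (A × B) ℂ) (hP : P.PosSemidef) :
    ((Fintype.card B : ℂ) • (ptraceB P ⊗ₖ (1 : Matrix B B ℂ)) - P).PosSemidef := by
  refine Matrix.PosSemidef.of_dotProduct_mulVec_nonneg ?_ ?_
  · rw [Matrix.IsHermitian, conjTranspose_sub, conjTranspose_smul, star_natCast,
      (herm_kron hP.1), hP.1]
  · intro x
    rw [sub_mulVec, dotProduct_sub, smul_mulVec, dotProduct_smul, smul_eq_mul,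
      sub_nonneg]
    set S := CFC.sqrt P with hS
    have hS2 : S * S = P := CFC.sqrt_mul_sqrt_self P hP.nonneg
    have hSh : Sᴴ = S := (CFC.sqrt_nonneg P).posSemidef.isHermitian
    have hPx : ∀ v : A × B → ℂ, star v ⬝ᵥ (P *ᵥ v) = star (S *ᵥ v) ⬝ᵥ (S *ᵥ v) := by
      intro v
      rw [← hS2, ← mulVec_mulVec, dotProduct_mulVec, star_mulVec, hSh]
    have hx : x = ∑ b, emb x b b := by
      funext p
      simp only [Finset.sum_apply, emb]
      rw [Finset.sum_ite_eq Finset.univ p.2 (fun b => x (p.1, b))]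
      simp
    have hSx : S *ᵥ x = ∑ b, S *ᵥ emb x b b := by
      conv_lhs => rw [hx]
      exact map_sum S.mulVecLin (fun b => emb x b b) Finset.univ
    have hcard : (0:ℂ) ≤ (Fintype.card B : ℂ) := by
      rw [Complex.le_def]
      simp
    calc star x ⬝ᵥ (P *ᵥ x) = star (∑ b, S *ᵥ emb x b b) ⬝ᵥ (∑ b, S *ᵥ emb x b b) := by
          rw [hPx, hSx]
      _ ≤ (Fintype.card B : ℂ) * ∑ b, star (S *ᵥ emb x b b) ⬝ᵥ (S *ᵥ emb x b b) := avg _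
      _ = (Fintype.card B : ℂ) * ∑ b, star (emb x b b) ⬝ᵥ (P *ᵥ emb x b b) := by
          rw [Finset.sum_congr rfl fun b _ => (hPx (emb x b b)).symm]
      _ ≤ (Fintype.card B : ℂ) * ∑ b, ∑ k, star (emb x b k) ⬝ᵥ (P *ᵥ emb x b k) := by
          refine mul_le_mul_of_nonneg_left (Finset.sum_le_sum fun b _ => ?_) hcard
          exact Finset.single_le_sum (fun k _ => hP.dotProduct_mulVec_nonneg (emb x b k)) (Finset.mem_univ b)
      _ = (Fintype.card B : ℂ) * (star x ⬝ᵥ ((ptraceB P ⊗ₖ (1 : Matrix B B ℂ)) *ᵥ x)) := by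
          rw [quad_kron]

lemma trace_eq_sum_col {n : Type*} [Fintype n] [DecidableEq n] {P : Matrix n n ℂ}
    (hP : P.PosSemidef) :
    P.trace = ∑ j, (star (fun i => CFC.sqrt P i j)) ⬝ᵥ (fun i => CFC.sqrt P i j) := by
  conv_lhs => rw [← CFC.sqrt_mul_sqrt_self P hP.nonneg]
  simp only [Matrix.trace, Matrix.diag, Matrix.mul_apply, dotProduct, Pi.star_apply]
  refine Finset.sum_congr rfl fun j _ => Finset.sum_congr rfl fun i _ => ?_
  rw [(CFC.sqrt_nonneg P).posSemidef.isHermitian.apply j i]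

lemma trace_nonneg' {n : Type*} [Fintype n] [DecidableEq n] {P : Matrix n n ℂ}
    (hP : P.PosSemidef) : 0 ≤ P.trace := by
  rw [trace_eq_sum_col hP]
  exact Finset.sum_nonneg fun j _ => dotProduct_star_self_nonneg _

lemma eq_zero_of_trace_zero {n : Type*} [Fintype n] [DecidableEq n] {P : Matrix n n ℂ}
    (hP : P.PosSemidef) (h0 : P.trace = 0) : P = 0 := by
  rw [trace_eq_sum_col hP] at h0
  have hz := (Finset.sum_eq_zero_iff_of_nonneg
    (fun j _ => dotProduct_star_self_nonneg (R := ℂ) _)).mp h0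
  have hS : CFC.sqrt P = 0 := by
    ext i j
    have := dotProduct_star_self_eq_zero.mp (hz j (Finset.mem_univ j))
    exact congr_fun this i
  rw [← CFC.sqrt_mul_sqrt_self P hP.nonneg, hS, Matrix.mul_zero]


end Helpers

/-- For any nonzero matrix ξ on A⊗B, with σ_A := ‖ξ‖₁⁻¹ · Tr_B[√(ξξ†)], the operator σ_A
is a unit-trace positive semidefinite operator on A and
√(ξξ†) ⪯ d_B · ‖ξ‖₁ · (σ_A ⊗ 1_B) in the Loewner order. -/
theorem abs_le_dimB_smul_marginal_kron_one {A B : Type*} [Fintype A] [DecidableEq A]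
    [Fintype B] [DecidableEq B]
    (ξ : Matrix (A × B) (A × B) ℂ) (hξ : ξ ≠ 0) :
    ((((traceNorm ξ : ℂ))⁻¹ • ptraceB (absM ξ)).PosSemidef) ∧
    (((traceNorm ξ : ℂ))⁻¹ • ptraceB (absM ξ)).trace = 1 ∧
    ((((Fintype.card B : ℂ) * (traceNorm ξ : ℂ)) •
        ((((traceNorm ξ : ℂ))⁻¹ • ptraceB (absM ξ)) ⊗ₖ (1 : Matrix B B ℂ)) - absM ξ).PosSemidef) := by
  have hQ := Matrix.posSemidef_self_mul_conjTranspose ξ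
  set P := absM ξ with hPdef
  have hP : P.PosSemidef := (CFC.sqrt_nonneg (ξ * ξᴴ)).posSemidef
  set t := traceNorm ξ with htdef
  have htr : P.trace = (t : ℂ) := by
    have hh : (starRingEnd ℂ) P.trace = P.trace := by
      rw [← Complex.star_def, ← Matrix.trace_conjTranspose, hP.1]
    exact (Complex.conj_eq_iff_re.mp hh).symm
  have htne : P.trace ≠ 0 := by
    intro h0
    have hP0 : P = 0 := eq_zero_of_trace_zero hP h0
    have : ξ * ξᴴ = 0 := by
      rw [← CFC.sqrt_mul_sqrt_self (ξ * ξᴴ) hQ.nonneg]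
      show P * P = 0
      rw [hP0, Matrix.mul_zero]
    exact hξ (Matrix.self_mul_conjTranspose_eq_zero.mp this)
  have htC : (t : ℂ) ≠ 0 := fun h => htne (by rw [htr, h])
  have h0t : (0:ℂ) ≤ (t : ℂ) := htr ▸ trace_nonneg' hP
  have hinv : (0:ℂ) ≤ ((t : ℂ))⁻¹ := by
    rw [← Complex.ofReal_inv, Complex.zero_le_real]
    exact inv_nonneg.mpr (Complex.zero_le_real.mp h0t)
  refine ⟨Matrix.PosSemidef.of_dotProduct_mulVec_nonneg ?_ ?_, ?_, ?_⟩
  · rw [Matrix.IsHermitian, conjTranspose_smul, herm_ptraceB hP.1, star_inv₀]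
    congr 1
    simp [Complex.star_def, Complex.conj_ofReal]
  · intro y
    rw [smul_mulVec, dotProduct_smul, smul_eq_mul]
    refine mul_nonneg hinv ?_
    rw [quad_ptraceB]
    exact Finset.sum_nonneg fun k _ => hP.dotProduct_mulVec_nonneg _
  · rw [Matrix.trace_smul, trace_ptraceB, htr, smul_eq_mul, inv_mul_cancel₀ htC]
  · rw [Matrix.smul_kronecker, smul_smul, mul_assoc, mul_inv_cancel₀ htC, mul_one]
    exact keyPSD P hP
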